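/- Let a > 0, let 0 < r ≤ a/2, and let q ∈ [1,∞). Then ∫_ℝ |λ_a(t) − λ_{a−r}(t)|^q dt ≥ r^q · (a/2 − r), where λ_s(t) = max(0, min(t, s − t)). -/

import Mathlib

open MeasureTheory

/-- The first persistence landscape of the one-point persistence diagram `{(0, s)}`:
`λ_s(t) = max 0 (min t (s − t))`. -/
noncomputable def landscapeFn (s : ℝ) (t : ℝ) : ℝ := max 0 (min t (s - t))

/-- For `a > 0`, `0 < r ≤ a/2` and `q ∈ [1,∞)`,
`∫_ℝ |λ_a(t) − λ_{a−r}(t)|^q dt ≥ r^q · (a/2 − r)`. -/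
theorem landscape_Lq_lower_bound
    (a r q : ℝ) (ha : 0 < a) (hr : 0 < r) (hra : r ≤ a / 2) (hq : 1 ≤ q) :
    r ^ q * (a / 2 - r) ≤ ∫ t : ℝ, |landscapeFn a t - landscapeFn (a - r) t| ^ q := by
  have hq0 : (0:ℝ) < q := lt_of_lt_of_le one_pos hq
  set f : ℝ → ℝ := fun t => |landscapeFn a t - landscapeFn (a - r) t| ^ q with hf
  have hcont : Continuous f := by
    have h : Continuous fun t => landscapeFn a t - landscapeFn (a - r) t := by
      unfold landscapeFn; fun_prop
    exact h.abs.rpow_const fun x => Or.inr hq0.le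
  have hzero : ∀ t : ℝ, t ∉ Set.Icc (0:ℝ) a → f t = 0 := by
    intro t ht
    simp only [Set.mem_Icc, not_and_or, not_le] at ht
    have h1 : landscapeFn a t = 0 ∧ landscapeFn (a - r) t = 0 := by
      rcases ht with ht | ht
      · constructor <;>
        · unfold landscapeFn
          rw [max_eq_left]
          exact le_trans (min_le_left _ _) ht.le
      · constructor <;>
        · unfold landscapeFn
          rw [max_eq_left]
          refine le_trans (min_le_right _ _) ?_
          linarith [hr.le]
    rw [hf]; simp [h1.1, h1.2, Real.zero_rpow (ne_of_gt hq0)]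
  have hsupp : HasCompactSupport f := by
    apply HasCompactSupport.intro (isCompact_Icc (a := (0:ℝ)) (b := a))
    exact hzero
  have hint : Integrable f := hcont.integrable_of_hasCompactSupport hsupp
  have hnn : 0 ≤ᵐ[volume] f := Filter.Eventually.of_forall fun t =>
    Real.rpow_nonneg (abs_nonneg _) q
  have hstep : ∫ t in Set.Icc (a/2) (a - r), f t ≤ ∫ t, f t :=
    setIntegral_le_integral hint hnn
  have hval : ∀ t ∈ Set.Icc (a/2) (a - r), f t = r ^ q := by
    intro t ht
    obtain ⟨h1, h2⟩ := ht
    have hA : landscapeFn a t = a - t := by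
      unfold landscapeFn
      rw [min_eq_right (by linarith), max_eq_right (by linarith)]
    have hB : landscapeFn (a - r) t = a - r - t := by
      unfold landscapeFn
      rw [min_eq_right (by linarith), max_eq_right (by linarith)]
    rw [hf]
    simp only [hA, hB]
    rw [show a - t - (a - r - t) = r by ring, abs_of_pos hr]
  have hconst : ∫ t in Set.Icc (a/2) (a - r), f t = r ^ q * (a / 2 - r) := by
    rw [setIntegral_congr_fun measurableSet_Icc hval, setIntegral_const,
      measureReal_def, Real.volume_Icc, smul_eq_mul]
    rw [ENNReal.toReal_ofReal (by linarith)]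
    ring
  linarith [hstep, hconst]
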